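/- Let d1, d2 be positive real numbers and set t = d1*d2/(d1 + 4*d2). For a positive real number x2, the following are equivalent: (i) there exists a real number c such that -d1/2 + t*x2/2 - c*d1*x2^d2 = 0 and (t - d2)/(2*x2^2) - t/4 - c*d2*x2^(d2-1) = 0 (the Lagrange system (9) at x1 = 1, with real powers of the positive base x2); (ii) x2 = 2 or x2 = 4*d2/(d1 + 2*d2). -/

import Mathlib

/-- Theorem 2 at the level of the variational equations: the normalized (x1 = 1)
Lagrange system (9) has a solution for some multiplier c iff x2 = 2 or
x2 = 4*d2/(d1+2*d2). -/
theorem lagrange_system_iff_einstein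
    (d1 d2 : ℝ) (hd1 : 0 < d1) (hd2 : 0 < d2)
    (t : ℝ) (ht : t = d1 * d2 / (d1 + 4 * d2))
    (x2 : ℝ) (hx2 : 0 < x2) :
    (∃ c : ℝ, -d1 / 2 + t * x2 / 2 - c * d1 * x2 ^ d2 = 0 ∧
        (t - d2) / (2 * x2 ^ 2) - t / 4 - c * d2 * x2 ^ (d2 - 1) = 0)
      ↔ x2 = 2 ∨ x2 = 4 * d2 / (d1 + 2 * d2) := by
  have hden : (0:ℝ) < d1 + 4 * d2 := by linarith
  have hden2 : (0:ℝ) < d1 + 2 * d2 := by linarith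
  have hA : (0:ℝ) < x2 ^ d2 := Real.rpow_pos_of_pos hx2 d2
  have hsub : x2 ^ (d2 - 1) = x2 ^ d2 / x2 := Real.rpow_sub_one (ne_of_gt hx2) d2
  have ht' : t * (d1 + 4 * d2) = d1 * d2 := by
    rw [ht]; field_simp
  constructor
  · rintro ⟨c, h1, h2⟩
    rw [hsub] at h2
    have e1 : c * (d1 * d2 * x2 ^ d2) = d2 * (t * x2 / 2 - d1 / 2) := by nlinarith
    have e2 : c * (d1 * d2 * x2 ^ d2) = d1 * x2 * ((t - d2) / (2 * x2 ^ 2) - t / 4) := by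
      have h2' : c * d2 * (x2 ^ d2 / x2) = (t - d2) / (2 * x2 ^ 2) - t / 4 := by linarith
      have := congrArg (fun y => d1 * x2 * y) h2'
      field_simp at this ⊢
      nlinarith [this]
    have h3 : d2 * (t * x2 - d1) * (2 * x2 ^ 2 * 4) =
        d1 * x2 * ((t - d2) * 4 - 2 * x2 ^ 2 * t) * 2 := by
      have h4 : d2 * (t * x2 / 2 - d1 / 2) = d1 * x2 * ((t - d2) / (2 * x2 ^ 2) - t / 4) := by
        rw [← e1, ← e2]
      field_simp at h4
      linear_combination (2 * x2) * h4
    have key' : 4 * d1 * d2 * x2 * ((x2 - 2) * ((d1 + 2 * d2) * x2 - 4 * d2)) = 0 := by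
      linear_combination (d1 + 4 * d2) * h3 -
        (8 * d2 * x2 ^ 3 + 4 * d1 * x2 ^ 3 - 8 * d1 * x2) * ht'
    have hne : (4 * d1 * d2 * x2 : ℝ) ≠ 0 := by positivity
    have key : (x2 - 2) * ((d1 + 2 * d2) * x2 - 4 * d2) = 0 := by
      rcases mul_eq_zero.mp key' with h | h
      · exact absurd h hne
      · exact h
    rcases mul_eq_zero.mp key with h | h
    · left; linarith
    · right; field_simp; linarith
  · intro h
    have hkey : (x2 - 2) * ((d1 + 2 * d2) * x2 - 4 * d2) = 0 := by
      rcases h with h | h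
      · rw [h]; ring
      · rw [h]; field_simp; ring
    have hH3 : 8 * d2 * x2 ^ 2 * (t * x2 - d1) =
        2 * d1 * x2 * (4 * (t - d2) - 2 * t * x2 ^ 2) := by
      have h0 : (d1 + 4 * d2) * (8 * d2 * x2 ^ 2 * (t * x2 - d1) -
          2 * d1 * x2 * (4 * (t - d2) - 2 * t * x2 ^ 2)) = 0 := by
        linear_combination 4 * d1 * d2 * x2 * hkey +
          (8 * d2 * x2 ^ 3 + 4 * d1 * x2 ^ 3 - 8 * d1 * x2) * ht'
      have := mul_eq_zero.mp h0
      rcases this with h' | h'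
      · exact absurd h' (ne_of_gt hden)
      · linarith
    refine ⟨(t * x2 - d1) / (2 * d1 * x2 ^ d2), ?_, ?_⟩
    · field_simp; ring
    · rw [hsub]
      have hc : (t * x2 - d1) / (2 * d1 * x2 ^ d2) * d2 * (x2 ^ d2 / x2) =
          d2 * (t * x2 - d1) / (2 * d1 * x2) := by
        field_simp
      rw [hc]
      field_simp
      apply mul_left_cancel₀ (ne_of_gt hx2)
      linear_combination (-1/2 : ℝ) * hH3
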